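/- arXiv:1705.05397 — 2 statements merged into one kernel-verified Lean document; each statement's English description precedes it below -/
import Mathlib

section
/- Let ρ be a density matrix and E, Π orthogonal projections on ℂⁿ with p_Π := tr(Π ρ) > 0. With Ẽ = I − E, N^s_x = G_s(x−1)·E + G_s(x)·Ẽ, p^s_− := (1/p_Π) ∫_{−∞}^{0} tr((N^s_x)† Π N^s_x ρ) dx, and p^s_d := (1 − e^{−1/(4s²)})/2, one has the exact asymptotic lim_{s → ∞} s · ( p^s_− − 1/2 − p^s_d / p_Π ) = − Re tr(ρ E Π) / (p_Π √π). -/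
open MeasureTheory Matrix Filter
open scoped ComplexOrder

/-- The Gaussian pointer wavefunction with spread `s`:
`G_s(x) = (π s²)^(−1/4) exp(−x²/(2 s²))`. -/
noncomputable def G (s x : ℝ) : ℝ :=
  (Real.pi * s ^ 2) ^ (-(1 / 4 : ℝ)) * Real.exp (-x ^ 2 / (2 * s ^ 2))

/-- The Kraus operators of the Gaussian pointer measurement of the projection `E`
with pointer spread `s`: `N^s_x = G_s(x−1)·E + G_s(x)·(I − E)`. -/
noncomputable def Ns {n : ℕ} (E : Matrix (Fin n) (Fin n) ℂ) (s x : ℝ) :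
    Matrix (Fin n) (Fin n) ℂ :=
  (G s (x - 1) : ℂ) • E + (G s x : ℂ) • (1 - E)

/-- The disturbance probability `p^s_d = (1 − e^{−1/(4s²)})/2`. -/
noncomputable def pd (s : ℝ) : ℝ := (1 - Real.exp (-1 / (4 * s ^ 2))) / 2

/-- The conditional probability of a negative pointer reading given successful
post-selection: `p^s_− = (1/p_P) ∫_{−∞}^{0} tr((N^s_x)† P N^s_x ρ) dx`, where
`p_P = tr(P ρ)`. -/
noncomputable def pminus {n : ℕ} (ρ E P : Matrix (Fin n) (Fin n) ℂ) (s : ℝ) : ℝ :=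
  (1 / (Matrix.trace (P * ρ)).re)
    * ∫ x in Set.Iio (0 : ℝ), (Matrix.trace ((Ns E s x)ᴴ * P * Ns E s x * ρ)).re

/-- auxiliary: the error-function-like integral -/
noncomputable def phi (t : ℝ) : ℝ := ∫ u in (0:ℝ)..t, Real.exp (-u ^ 2)

lemma gauss_Iio {b : ℝ} (hb : 0 < b) (c : ℝ) :
    ∫ x in Set.Iio (0:ℝ), Real.exp (-b * (x - c) ^ 2)
      = Real.sqrt (Real.pi / b) / 2 - ∫ u in (0:ℝ)..c, Real.exp (-b * u ^ 2) := by
  have hint : Integrable (fun x : ℝ => Real.exp (-b * x ^ 2)) := integrable_exp_neg_mul_sq hb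
  have h1 : ∫ x in Set.Iio (0:ℝ), Real.exp (-b * (x - c) ^ 2)
      = ∫ x in Set.Iic (-c), Real.exp (-b * x ^ 2) := by
    rw [← integral_Iic_eq_integral_Iio]
    have hmp : MeasurePreserving (fun x : ℝ => x - c) volume volume :=
      measurePreserving_sub_right volume c
    have hemb : MeasurableEmbedding (fun x : ℝ => x - c) :=
      (Homeomorph.subRight c).isClosedEmbedding.measurableEmbedding
    have := hmp.setIntegral_preimage_emb hemb (fun x => Real.exp (-b * x ^ 2)) (Set.Iic (-c))
    have hpre : (fun x : ℝ => x - c) ⁻¹' Set.Iic (-c) = Set.Iic 0 := by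
      ext x; simp [Set.mem_Iic, sub_le_iff_le_add]
    rw [hpre] at this
    exact this
  have h2 : ∫ x in Set.Iic (0:ℝ), Real.exp (-b * x ^ 2) = Real.sqrt (Real.pi / b) / 2 := by
    have : ∫ x in Set.Iic (0:ℝ), Real.exp (-b * (-x) ^ 2)
        = ∫ x in Set.Ioi (-(0:ℝ)), Real.exp (-b * x ^ 2) :=
      integral_comp_neg_Iic 0 (fun x => Real.exp (-b * x ^ 2))
    simp only [neg_sq, neg_zero] at this
    rw [this, integral_gaussian_Ioi]
  have h3 : (∫ x in Set.Iic (0:ℝ), Real.exp (-b * x ^ 2))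
      - ∫ x in Set.Iic (-c), Real.exp (-b * x ^ 2)
      = ∫ x in (-c)..0, Real.exp (-b * x ^ 2) :=
    intervalIntegral.integral_Iic_sub_Iic hint.integrableOn hint.integrableOn
  have h4 : ∫ x in (-c)..(0:ℝ), Real.exp (-b * x ^ 2) = ∫ u in (0:ℝ)..c, Real.exp (-b * u ^ 2) := by
    have := intervalIntegral.integral_comp_neg (a := 0) (b := c) (fun x => Real.exp (-b * x ^ 2))
    simp only [neg_sq, neg_zero] at this
    rw [← this]
  rw [h1, eq_sub_iff_add_eq, ← h2, ← h4, ← h3]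
  ring

lemma sub_phi {s : ℝ} (hs : 0 < s) (c : ℝ) :
    ∫ u in (0:ℝ)..c, Real.exp (-(1/s^2) * u ^ 2) = s * phi (c / s) := by
  have h : ∀ u : ℝ, Real.exp (-(1/s^2) * u ^ 2) = Real.exp (-(u/s) ^ 2) := by
    intro u; congr 1; field_simp
  simp only [h]
  rw [intervalIntegral.integral_comp_div (fun x => Real.exp (-x ^ 2)) hs.ne']
  simp [phi, smul_eq_mul]

lemma Ksq_mul {s : ℝ} (hs : 0 < s) :
    ((Real.pi * s ^ 2) ^ (-(1 / 4 : ℝ))) ^ 2 * (Real.sqrt Real.pi * s) = 1 := by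
  have hπ : (0:ℝ) < Real.pi := Real.pi_pos
  have hps : (0:ℝ) < Real.pi * s ^ 2 := by positivity
  have h1 : ((Real.pi * s ^ 2) ^ (-(1 / 4 : ℝ))) ^ 2 = (Real.pi * s ^ 2) ^ (-(1 / 2 : ℝ)) := by
    rw [← Real.rpow_natCast ((Real.pi * s ^ 2) ^ (-(1 / 4 : ℝ))) 2, ← Real.rpow_mul hps.le]
    norm_num
  have h2 : Real.sqrt Real.pi * s = (Real.pi * s ^ 2) ^ ((1 / 2 : ℝ)) := by
    rw [← Real.sqrt_eq_rpow, Real.sqrt_mul hπ.le, Real.sqrt_sq hs.le]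
  rw [h1, h2, ← Real.rpow_add hps]
  norm_num

lemma G_sq_eq {s : ℝ} (hs : 0 < s) (y : ℝ) :
    G s y ^ 2 = ((Real.pi * s ^ 2) ^ (-(1 / 4 : ℝ))) ^ 2 * Real.exp (-(1/s^2) * y ^ 2) := by
  unfold G
  rw [mul_pow, sq (Real.exp _), ← Real.exp_add]
  congr 1
  field_simp; ring

lemma G_mul_eq {s : ℝ} (hs : 0 < s) (x : ℝ) :
    G s (x - 1) * G s x = ((Real.pi * s ^ 2) ^ (-(1 / 4 : ℝ))) ^ 2
      * Real.exp (-1 / (4 * s ^ 2)) * Real.exp (-(1/s^2) * (x - 1/2) ^ 2) := by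
  unfold G
  rw [mul_mul_mul_comm, ← sq, ← Real.exp_add, mul_assoc, ← Real.exp_add]
  congr 2
  field_simp; ring

lemma Iio_G_sq {s : ℝ} (hs : 0 < s) (c : ℝ) :
    ∫ x in Set.Iio (0:ℝ), G s (x - c) ^ 2 = 1/2 - phi (c / s) / Real.sqrt Real.pi := by
  have hb : (0:ℝ) < 1/s^2 := by positivity
  have hπ : (0:ℝ) < Real.sqrt Real.pi := Real.sqrt_pos.mpr Real.pi_pos
  simp only [G_sq_eq hs]
  rw [MeasureTheory.integral_const_mul, gauss_Iio hb, sub_phi hs]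
  have hsq : Real.sqrt (Real.pi / (1/s^2)) = Real.sqrt Real.pi * s := by
    rw [show Real.pi / (1/s^2) = Real.pi * s^2 by field_simp,
      Real.sqrt_mul Real.pi_pos.le, Real.sqrt_sq hs.le]
  rw [hsq]
  have hK := Ksq_mul hs
  set K := ((Real.pi * s ^ 2) ^ (-(1 / 4 : ℝ))) ^ 2
  field_simp
  linear_combination (Real.sqrt Real.pi - 2 * phi (c / s)) * Ksq_mul hs

lemma Iio_G_mul {s : ℝ} (hs : 0 < s) :
    ∫ x in Set.Iio (0:ℝ), G s (x - 1) * G s x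
      = Real.exp (-1 / (4 * s ^ 2)) * (1/2 - phi (1 / (2*s)) / Real.sqrt Real.pi) := by
  have hb : (0:ℝ) < 1/s^2 := by positivity
  have hπ : (0:ℝ) < Real.sqrt Real.pi := Real.sqrt_pos.mpr Real.pi_pos
  simp only [G_mul_eq hs]
  rw [MeasureTheory.integral_const_mul, gauss_Iio hb, sub_phi hs]
  have hsq : Real.sqrt (Real.pi / (1/s^2)) = Real.sqrt Real.pi * s := by
    rw [show Real.pi / (1/s^2) = Real.pi * s^2 by field_simp,
      Real.sqrt_mul Real.pi_pos.le, Real.sqrt_sq hs.le]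
  rw [hsq, show (1:ℝ)/2/s = 1/(2*s) by ring]
  have hK := Ksq_mul hs
  set K := ((Real.pi * s ^ 2) ^ (-(1 / 4 : ℝ))) ^ 2
  set e := Real.exp (-1 / (4 * s ^ 2))
  field_simp
  rw [show (1:ℝ)/(s*2) = 1/(2*s) by ring]
  linear_combination e * (Real.sqrt Real.pi - 2 * phi (1/(2*s))) * Ksq_mul hs

lemma integrableOn_G_sq {s : ℝ} (hs : 0 < s) (c : ℝ) :
    IntegrableOn (fun x => G s (x - c) ^ 2) (Set.Iio (0:ℝ)) := by
  have hb : (0:ℝ) < 1/s^2 := by positivity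
  have : Integrable (fun x : ℝ => ((Real.pi * s ^ 2) ^ (-(1 / 4 : ℝ))) ^ 2
      * Real.exp (-(1/s^2) * (x - c) ^ 2)) :=
    ((integrable_exp_neg_mul_sq hb).comp_sub_right c).const_mul _
  simp only [G_sq_eq hs]
  exact this.integrableOn

lemma integrableOn_G_mul {s : ℝ} (hs : 0 < s) :
    IntegrableOn (fun x => G s (x - 1) * G s x) (Set.Iio (0:ℝ)) := by
  have hb : (0:ℝ) < 1/s^2 := by positivity
  have : Integrable (fun x : ℝ => ((Real.pi * s ^ 2) ^ (-(1 / 4 : ℝ))) ^ 2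
      * Real.exp (-1 / (4 * s ^ 2)) * Real.exp (-(1/s^2) * (x - 1/2) ^ 2)) :=
    ((integrable_exp_neg_mul_sq hb).comp_sub_right (1/2)).const_mul _
  simp only [G_mul_eq hs]
  exact this.integrableOn
lemma trace_expand {n : ℕ} (ρ E P : Matrix (Fin n) (Fin n) ℂ)
    (hE : E.IsHermitian) (s x : ℝ) :
    (Matrix.trace ((Ns E s x)ᴴ * P * Ns E s x * ρ)).re
      = G s (x-1)^2 * (Matrix.trace (E*P*E*ρ)).re
        + G s x^2 * (Matrix.trace ((1-E)*P*(1-E)*ρ)).re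
        + (G s (x-1) * G s x)
          * ((Matrix.trace (E*P*(1-E)*ρ)).re + (Matrix.trace ((1-E)*P*E*ρ)).re) := by
  have hH : (Ns E s x)ᴴ = Ns E s x := by
    simp [Ns, conjTranspose_add, conjTranspose_smul, conjTranspose_sub, hE.eq,
      Complex.star_def, Complex.conj_ofReal]
  rw [hH]
  simp only [Ns, add_mul, mul_add, smul_mul_assoc, mul_smul_comm, trace_add, trace_smul,
    smul_smul, smul_eq_mul, Matrix.mul_assoc]
  simp only [Complex.add_re, Complex.mul_re, Complex.ofReal_re, Complex.ofReal_im,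
    Complex.mul_im]
  ring

lemma key_integral {n : ℕ} (ρ E P : Matrix (Fin n) (Fin n) ℂ)
    (hE : E.IsHermitian) {s : ℝ} (hs : 0 < s) :
    ∫ x in Set.Iio (0:ℝ), (Matrix.trace ((Ns E s x)ᴴ * P * Ns E s x * ρ)).re
      = (1/2 - phi (1/s) / Real.sqrt Real.pi) * (Matrix.trace (E*P*E*ρ)).re
        + (1/2) * (Matrix.trace ((1-E)*P*(1-E)*ρ)).re
        + Real.exp (-1 / (4 * s ^ 2)) * (1/2 - phi (1/(2*s)) / Real.sqrt Real.pi)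
          * ((Matrix.trace (E*P*(1-E)*ρ)).re + (Matrix.trace ((1-E)*P*E*ρ)).re) := by
  simp only [trace_expand ρ E P hE s]
  have h1 : IntegrableOn (fun x => G s (x-1)^2 * (Matrix.trace (E*P*E*ρ)).re)
      (Set.Iio (0:ℝ)) := (integrableOn_G_sq hs 1).mul_const _
  have h0 : IntegrableOn (fun x => G s x ^2 * (Matrix.trace ((1-E)*P*(1-E)*ρ)).re)
      (Set.Iio (0:ℝ)) := by
    have := (integrableOn_G_sq hs 0).mul_const (Matrix.trace ((1-E)*P*(1-E)*ρ)).re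
    simpa [IntegrableOn] using this
  have h01 : IntegrableOn (fun x => (G s (x-1) * G s x)
        * ((Matrix.trace (E*P*(1-E)*ρ)).re + (Matrix.trace ((1-E)*P*E*ρ)).re))
      (Set.Iio (0:ℝ)) := (integrableOn_G_mul hs).mul_const _
  have h12 : IntegrableOn (fun x => G s (x-1)^2 * (Matrix.trace (E*P*E*ρ)).re
      + G s x ^2 * (Matrix.trace ((1-E)*P*(1-E)*ρ)).re) (Set.Iio (0:ℝ)) := h1.add h0
  rw [MeasureTheory.integral_add h12 h01, MeasureTheory.integral_add h1 h0,
    MeasureTheory.integral_mul_const, MeasureTheory.integral_mul_const,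
    MeasureTheory.integral_mul_const, Iio_G_mul hs]
  have e1 : ∫ x in Set.Iio (0:ℝ), G s (x-1)^2 = 1/2 - phi (1/s) / Real.sqrt Real.pi := by
    simpa using Iio_G_sq hs 1
  have e0 : ∫ x in Set.Iio (0:ℝ), G s x ^2 = 1/2 := by
    have := Iio_G_sq hs 0
    simpa [phi] using this
  rw [e1, e0]

lemma phi_hasDerivAt : HasDerivAt phi 1 0 := by
  have hc : Continuous fun u : ℝ => Real.exp (-u ^ 2) := by continuity
  have := (hc.integral_hasStrictDerivAt 0 0).hasDerivAt
  simp only [neg_zero, ne_eq, OfNat.ofNat_ne_zero, not_false_eq_true, zero_pow, Real.exp_zero] at this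
  exact this

lemma tendsto_s_phi {c : ℝ} (hc : c ≠ 0) :
    Tendsto (fun s : ℝ => s * phi (c / s)) atTop (nhds c) := by
  have hslope : Tendsto (slope phi 0) (nhdsWithin 0 {(0:ℝ)}ᶜ) (nhds 1) :=
    hasDerivAt_iff_tendsto_slope.mp phi_hasDerivAt
  have h0 : Tendsto (fun s : ℝ => c / s) atTop (nhds 0) := by
    simpa [div_eq_mul_inv] using tendsto_inv_atTop_zero.const_mul c
  have h0' : Tendsto (fun s : ℝ => c / s) atTop (nhdsWithin 0 {(0:ℝ)}ᶜ) := by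
    refine tendsto_nhdsWithin_of_tendsto_nhds_of_eventually_within _ h0 ?_
    filter_upwards [eventually_gt_atTop 0] with s hs
    exact div_ne_zero hc hs.ne'
  have hcomp : Tendsto (fun s : ℝ => slope phi 0 (c / s)) atTop (nhds 1) :=
    hslope.comp h0'
  have := hcomp.const_mul c
  rw [mul_one] at this
  refine this.congr' ?_
  filter_upwards [eventually_gt_atTop 0] with s hs
  have hphi0 : phi 0 = 0 := by simp [phi]
  rw [slope_def_field, hphi0, sub_zero, sub_zero]
  field_simp

lemma tendsto_e : Tendsto (fun s : ℝ => Real.exp (-1 / (4 * s ^ 2))) atTop (nhds 1) := by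
  have h1 : Tendsto (fun s : ℝ => -1 / (4 * s ^ 2)) atTop (nhds 0) := by
    have h2 : Tendsto (fun s : ℝ => 4 * s ^ 2) atTop atTop :=
      (tendsto_pow_atTop two_ne_zero).const_mul_atTop (by norm_num)
    have h3 : (fun s : ℝ => -1 / (4 * s ^ 2))
        = fun s : ℝ => -1 * (((fun r : ℝ => r⁻¹) ∘ fun s : ℝ => 4 * s ^ 2) s) := by
      funext s; simp [div_eq_mul_inv]
    rw [h3]
    simpa using (tendsto_inv_atTop_zero.comp h2).const_mul (-1)
  have := (Real.continuous_exp.tendsto 0).comp h1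
  simpa [Function.comp_def] using this

lemma tendsto_w : Tendsto (fun s : ℝ => s * (1 - Real.exp (-1 / (4 * s ^ 2)))) atTop (nhds 0) := by
  have hg : Tendsto (fun s : ℝ => 1 / (4 * s)) atTop (nhds 0) := by
    have h2 : Tendsto (fun s : ℝ => 4 * s) atTop atTop :=
      tendsto_id.const_mul_atTop (by norm_num)
    have h3 : (fun s : ℝ => 1 / (4 * s))
        = ((fun r : ℝ => r⁻¹) ∘ fun s : ℝ => 4 * s) := by
      funext s; simp [one_div]
    rw [h3]
    exact tendsto_inv_atTop_zero.comp h2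
  refine squeeze_zero' ?_ ?_ hg
  · filter_upwards [eventually_gt_atTop 0] with s hs
    have : Real.exp (-1 / (4 * s ^ 2)) ≤ 1 := by
      rw [Real.exp_le_one_iff]
      have : (0:ℝ) < 4 * s ^ 2 := by positivity
      rw [div_nonpos_iff]; right; constructor <;> nlinarith
    nlinarith
  · filter_upwards [eventually_gt_atTop 0] with s hs
    have hδ : (0:ℝ) < 4 * s ^ 2 := by positivity
    have hb : 1 - Real.exp (-1 / (4 * s ^ 2)) ≤ 1 / (4 * s ^ 2) := by
      have h := Real.add_one_le_exp (-1 / (4 * s ^ 2))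
      have hx : -1 / (4 * s ^ 2) = -(1 / (4 * s ^ 2)) := by ring
      linarith
    calc s * (1 - Real.exp (-1 / (4 * s ^ 2))) ≤ s * (1 / (4 * s ^ 2)) := by
          exact mul_le_mul_of_nonneg_left hb hs.le
      _ = 1 / (4 * s) := by field_simp

lemma alg_id (p A B C sπ e φ1 φ2 s : ℝ) (hp : p = A + B + C) (hpne : p ≠ 0)
    (hπ : sπ ≠ 0) :
    s * ((1/p) * ((1/2 - φ1/sπ) * A + (1/2) * B + e * (1/2 - φ2/sπ) * C)
        - 1/2 - ((1 - e)/2) / p)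
      = (-(s * φ1) * A / sπ - e * (s * φ2) * C / sπ - (s * (1 - e)) * (C + 1) / 2) / p := by
  subst hp
  field_simp
  ring

/-- For a density matrix `ρ` and orthogonal projections `E`, `P` with
`p_P = tr(P ρ) > 0`, one has the exact asymptotic
`lim_{s → ∞} s · (p^s_− − 1/2 − p^s_d/p_P) = − Re tr(ρ E P) / (p_P √π)`. -/
theorem pminus_asymptotics
    (n : ℕ) (ρ E P : Matrix (Fin n) (Fin n) ℂ)
    (hρ : ρ.PosSemidef) (hρtr : ρ.trace = 1)
    (hE : E.IsHermitian) (hE2 : E * E = E)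
    (hP : P.IsHermitian) (hP2 : P * P = P)
    (hpos : 0 < (Matrix.trace (P * ρ)).re) :
    Tendsto (fun s : ℝ =>
        s * (pminus ρ E P s - 1 / 2 - pd s / (Matrix.trace (P * ρ)).re))
      atTop
      (nhds (-(Matrix.trace (ρ * E * P)).re
        / ((Matrix.trace (P * ρ)).re * Real.sqrt Real.pi))) := by
  have hπ : (0:ℝ) < Real.sqrt Real.pi := Real.sqrt_pos.mpr Real.pi_pos
  have hpne : (Matrix.trace (P * ρ)).re ≠ 0 := hpos.ne'
  -- abbreviations
  set A := (Matrix.trace (E*P*E*ρ)).re with hA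
  set B := (Matrix.trace ((1-E)*P*(1-E)*ρ)).re with hB
  set C := (Matrix.trace (E*P*(1-E)*ρ)).re + (Matrix.trace ((1-E)*P*E*ρ)).re with hC
  -- p = A + B + C
  have hsplitM : P * ρ = E*P*E*ρ + (1-E)*P*(1-E)*ρ + (E*P*(1-E)*ρ + (1-E)*P*E*ρ) := by
    noncomm_ring
  have hp : (Matrix.trace (P * ρ)).re = A + B + C := by
    rw [hsplitM, Matrix.trace_add, Matrix.trace_add, Matrix.trace_add,
      Complex.add_re, Complex.add_re, Complex.add_re, hA, hB, hC]
  -- target identity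
  have hconj : (Matrix.trace ((1-E)*P*E*ρ)).re = (Matrix.trace (E*P*(1-E)*ρ)).re := by
    have hH : (E*P*(1-E)*ρ)ᴴ = ρ * ((1-E) * (P * E)) := by
      simp [conjTranspose_mul, hρ.1.eq, hE.eq, hP.eq, Matrix.mul_assoc]
    have h1 : Matrix.trace ((E*P*(1-E)*ρ)ᴴ) = Matrix.trace ((1-E)*P*E*ρ) := by
      rw [hH, Matrix.trace_mul_comm]
      congr 1
      noncomm_ring
    have h2 : Matrix.trace ((E*P*(1-E)*ρ)ᴴ) = star (Matrix.trace (E*P*(1-E)*ρ)) :=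
      Matrix.trace_conjTranspose _
    have := h1.symm.trans h2
    rw [this]
    simp [Complex.star_def]
  have htarget : (Matrix.trace (ρ * E * P)).re = A + C / 2 := by
    have hcyc : Matrix.trace (ρ * E * P) = Matrix.trace (E * P * ρ) := by
      rw [Matrix.trace_mul_cycle, Matrix.trace_mul_cycle]
    have hsplit2 : E*P*ρ = E*P*E*ρ + E*P*(1-E)*ρ := by noncomm_ring
    rw [hcyc, hsplit2, Matrix.trace_add, Complex.add_re, hA, hC, hconj]
    ring
  -- the explicit expression
  have hev : (fun s : ℝ => s * (pminus ρ E P s - 1 / 2 - pd s / (Matrix.trace (P * ρ)).re))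
      =ᶠ[atTop] fun s : ℝ =>
        (-(s * phi (1/s)) * A / Real.sqrt Real.pi
          - Real.exp (-1 / (4 * s ^ 2)) * (s * phi (1/(2*s))) * C / Real.sqrt Real.pi
          - (s * (1 - Real.exp (-1 / (4 * s ^ 2)))) * (C + 1) / 2)
          / (Matrix.trace (P * ρ)).re := by
    filter_upwards [eventually_gt_atTop 0] with s hs
    have hkey := key_integral ρ E P hE hs
    rw [pminus, pd, hkey, ← hA, ← hB, ← hC]
    exact alg_id _ A B C _ _ _ _ s hp hpne hπ.ne'
  rw [tendsto_congr' hev]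
  -- the limit
  have hu : Tendsto (fun s : ℝ => s * phi (1/s)) atTop (nhds 1) := by
    simpa using tendsto_s_phi (c := 1) one_ne_zero
  have hv : Tendsto (fun s : ℝ => s * phi (1/(2*s))) atTop (nhds (1/2)) := by
    have heq : (fun s : ℝ => s * phi (1/(2*s))) = fun s : ℝ => s * phi ((1/2)/s) := by
      funext s; rw [div_div]
    rw [heq]
    exact tendsto_s_phi (by norm_num)
  have hF : Tendsto (fun s : ℝ =>
        (-(s * phi (1/s)) * A / Real.sqrt Real.pi
          - Real.exp (-1 / (4 * s ^ 2)) * (s * phi (1/(2*s))) * C / Real.sqrt Real.pi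
          - (s * (1 - Real.exp (-1 / (4 * s ^ 2)))) * (C + 1) / 2)
          / (Matrix.trace (P * ρ)).re) atTop
      (nhds ((-(1:ℝ) * A / Real.sqrt Real.pi - 1 * (1/2) * C / Real.sqrt Real.pi
          - 0 * (C + 1) / 2) / (Matrix.trace (P * ρ)).re)) := by
    exact ((((hu.neg.mul_const A).div_const _).sub
      (((tendsto_e.mul hv).mul_const C).div_const _)).sub
      ((tendsto_w.mul_const (C+1)).div_const 2)).div_const _
  have hval : (-(1:ℝ) * A / Real.sqrt Real.pi - 1 * (1/2) * C / Real.sqrt Real.pi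
          - 0 * (C + 1) / 2) / (Matrix.trace (P * ρ)).re
      = -(Matrix.trace (ρ * E * P)).re / ((Matrix.trace (P * ρ)).re * Real.sqrt Real.pi) := by
    rw [htarget]
    field_simp
    ring
  rw [← hval]
  exact hF
end

section
/- Let ρ be a density matrix and E, Π orthogonal projections on ℂⁿ with Re tr(ρ E Π) < 0 (so p_Π := tr(Π ρ) > 0). With Ẽ = I − E, N^s_x = G_s(x−1)·E + G_s(x)·Ẽ, p^s_− := (1/p_Π) ∫_{−∞}^{0} tr((N^s_x)† Π N^s_x ρ) dx, and p^s_d := (1 − e^{−1/(4s²)})/2, there exists s₀ > 0 such that for all s ≥ s₀ one has p^s_− > 1/2 + p^s_d / p_Π. (This is condition 2c of the technical Lemma underlying Theorem 2: for large pointer spread, an anomalous negative weak value makes the conditional probability of a negative pointer reading exceed the bound satisfied by all outcome-deterministic measurement non-contextual models.) -/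
open MeasureTheory Matrix Filter
open scoped ComplexOrder

section Aux

open Real Set Topology

noncomputable def cc (s : ℝ) : ℝ := (Real.pi * s ^ 2) ^ (-(1/2 : ℝ))
noncomputable def gg (s a x : ℝ) : ℝ := cc s * Real.exp (-(x - a)^2 / s^2)
noncomputable def KK (s a : ℝ) : ℝ := ∫ x in Set.Iio (0:ℝ), gg s a x

lemma cc_pos {s : ℝ} (hs : 0 < s) : 0 < cc s :=
  Real.rpow_pos_of_pos (by positivity) _

lemma gg_eq (s a x : ℝ) : gg s a x = cc s * Real.exp (-(1/s^2) * (x - a)^2) := by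
  rw [gg]; ring_nf

lemma gg_integrable {s : ℝ} (hs : 0 < s) (a : ℝ) : Integrable (gg s a) := by
  have hb : 0 < 1/s^2 := by positivity
  have : Integrable (fun x : ℝ => Real.exp (-(1/s^2) * x^2)) := integrable_exp_neg_mul_sq hb
  have h2 : Integrable (fun x : ℝ => Real.exp (-(1/s^2) * (x - a)^2)) := this.comp_sub_right a
  apply (h2.const_mul (cc s)).congr
  filter_upwards with x using (gg_eq s a x).symm

lemma gg_shift (s a x : ℝ) : gg s a x = gg s 0 (x - a) := by simp [gg]

lemma KK_zero {s : ℝ} (hs : 0 < s) : KK s 0 = 1/2 := by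
  have hb : 0 < 1/s^2 := by positivity
  have hIoi : ∫ x in Ioi (0:ℝ), Real.exp (-(1/s^2) * x^2) = √(Real.pi / (1/s^2)) / 2 :=
    integral_gaussian_Ioi _
  have hIio : ∫ x in Iio (0:ℝ), Real.exp (-(1/s^2) * x^2)
      = ∫ x in Ioi (0:ℝ), Real.exp (-(1/s^2) * x^2) := by
    have := integral_comp_neg_Ioi (0:ℝ) (fun x => Real.exp (-(1/s^2) * x^2))
    simp only [neg_zero, neg_sq] at this
    rw [integral_Iic_eq_integral_Iio] at this
    exact this.symm
  have : KK s 0 = cc s * ∫ x in Iio (0:ℝ), Real.exp (-(1/s^2) * x^2) := by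
    rw [KK]
    simp_rw [gg_eq]
    rw [integral_const_mul]
    simp only [sub_zero]
  rw [this, hIio, hIoi]
  have hπs : Real.pi / (1/s^2) = Real.pi * s^2 := by field_simp
  rw [hπs]
  have hpos : (0:ℝ) < Real.pi * s^2 := by positivity
  rw [cc]
  rw [Real.rpow_neg hpos.le, ← Real.sqrt_eq_rpow]
  field_simp

lemma KK_eq {s a : ℝ} (hs : 0 < s) (ha : 0 ≤ a) :
    KK s a = 1/2 - ∫ x in Ioo (-a) (0:ℝ), gg s 0 x := by
  have ht : KK s a = ∫ x in Iio (-a), gg s 0 x := by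
    rw [KK]
    simp_rw [gg_shift s a]
    have h1 : MeasurePreserving (fun x : ℝ => x - a) volume volume :=
      measurePreserving_sub_right volume a
    have h2 : MeasurableEmbedding (fun x : ℝ => x - a) :=
      (Homeomorph.subRight a).measurableEmbedding
    have := h1.setIntegral_preimage_emb h2 (gg s 0) (Iio (-a))
    have hpre : (fun x : ℝ => x - a) ⁻¹' (Iio (-a)) = Iio 0 := by
      ext x; simp [sub_lt_iff_lt_add]
    rwa [hpre] at this
  have hdisj : Disjoint (Iio (-a)) (Ico (-a) (0:ℝ)) :=
    (Set.Iio_disjoint_Ici le_rfl).mono_right Set.Ico_subset_Ici_self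
  have hsplit : (∫ x in Iio (0:ℝ), gg s 0 x)
      = (∫ x in Iio (-a), gg s 0 x) + ∫ x in Ico (-a) (0:ℝ), gg s 0 x := by
    rw [← setIntegral_union hdisj measurableSet_Ico
      ((gg_integrable hs 0).integrableOn) ((gg_integrable hs 0).integrableOn),
      Set.Iio_union_Ico_eq_Iio (by linarith)]
  have hKK0 : (∫ x in Iio (0:ℝ), gg s 0 x) = 1/2 := KK_zero hs
  rw [integral_Ico_eq_integral_Ioo] at hsplit
  rw [ht]; linarith

lemma s_mul_cc {s : ℝ} (hs : 0 < s) : s * cc s = 1 / Real.sqrt Real.pi := by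
  rw [cc, Real.rpow_neg (by positivity), ← Real.sqrt_eq_rpow,
    Real.sqrt_mul Real.pi_pos.le, Real.sqrt_sq hs.le]
  rw [mul_inv, one_div]
  field_simp

lemma KK_tendsto {a : ℝ} (ha : 0 ≤ a) :
    Tendsto (fun s => s * (KK s a - 1/2)) atTop (𝓝 (-(a / Real.sqrt Real.pi))) := by
  have key : ∀ s : ℝ, 0 < s →
      s * (KK s a - 1/2) = -(s * ∫ x in Ioo (-a) (0:ℝ), gg s 0 x) := by
    intro s hs
    rw [KK_eq hs ha]; ring
  have hlow : ∀ s : ℝ, 0 < s →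
      (a / Real.sqrt Real.pi) * Real.exp (-a^2/s^2) ≤ s * ∫ x in Ioo (-a) (0:ℝ), gg s 0 x := by
    intro s hs
    have hmono : (∫ x in Ioo (-a) (0:ℝ), cc s * Real.exp (-a^2/s^2))
        ≤ ∫ x in Ioo (-a) (0:ℝ), gg s 0 x := by
      apply setIntegral_mono_on (integrableOn_const measure_Ioo_lt_top.ne)
        ((gg_integrable hs 0).integrableOn) measurableSet_Ioo
      intro x hx
      rw [gg, sub_zero]
      apply mul_le_mul_of_nonneg_left _ (cc_pos hs).le
      apply Real.exp_le_exp.2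
      rw [div_le_div_iff_of_pos_right (by positivity), neg_le_neg_iff]
      have h1 : -a ≤ x := hx.1.le
      have h2 : x ≤ 0 := hx.2.le
      nlinarith
    rw [setIntegral_const, Real.volume_real_Ioo_of_le (by linarith), sub_neg_eq_add, zero_add,
      smul_eq_mul] at hmono
    calc (a / Real.sqrt Real.pi) * Real.exp (-a^2/s^2)
        = s * (a * (cc s * Real.exp (-a^2/s^2))) := by
          have hc := s_mul_cc hs
          rw [div_eq_mul_one_div a, ← hc]; ring
      _ ≤ s * ∫ x in Ioo (-a) (0:ℝ), gg s 0 x := by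
          apply mul_le_mul_of_nonneg_left _ hs.le
          linarith
  have hhigh : ∀ s : ℝ, 0 < s →
      s * (∫ x in Ioo (-a) (0:ℝ), gg s 0 x) ≤ a / Real.sqrt Real.pi := by
    intro s hs
    have hmono : (∫ x in Ioo (-a) (0:ℝ), gg s 0 x)
        ≤ ∫ x in Ioo (-a) (0:ℝ), cc s := by
      apply setIntegral_mono_on ((gg_integrable hs 0).integrableOn)
        (integrableOn_const measure_Ioo_lt_top.ne) measurableSet_Ioo
      intro x hx
      rw [gg, sub_zero]
      calc cc s * Real.exp (-x^2/s^2) ≤ cc s * 1 := by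
            apply mul_le_mul_of_nonneg_left _ (cc_pos hs).le
            rw [← Real.exp_zero]
            apply Real.exp_le_exp.2
            have : 0 ≤ x^2/s^2 := by positivity
            rw [neg_div]
            linarith
        _ = cc s := mul_one _
    rw [setIntegral_const, Real.volume_real_Ioo_of_le (by linarith), sub_neg_eq_add, zero_add,
      smul_eq_mul] at hmono
    calc s * (∫ x in Ioo (-a) (0:ℝ), gg s 0 x) ≤ s * (a * cc s) :=
          mul_le_mul_of_nonneg_left hmono hs.le
      _ = a / Real.sqrt Real.pi := by
          have hc := s_mul_cc hs
          rw [div_eq_mul_one_div a, ← hc]; ring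
  have hexp : Tendsto (fun s : ℝ => (a / Real.sqrt Real.pi) * Real.exp (-a^2/s^2))
      atTop (𝓝 (a / Real.sqrt Real.pi)) := by
    have h0 : Tendsto (fun s : ℝ => -a^2/s^2) atTop (𝓝 0) :=
      Tendsto.div_atTop tendsto_const_nhds (tendsto_pow_atTop two_ne_zero)
    have := (Real.continuous_exp.tendsto 0).comp h0
    rw [Real.exp_zero] at this
    simpa using tendsto_const_nhds.mul this
  have hmid : Tendsto (fun s : ℝ => s * ∫ x in Ioo (-a) (0:ℝ), gg s 0 x)
      atTop (𝓝 (a / Real.sqrt Real.pi)) := by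
    apply tendsto_of_tendsto_of_tendsto_of_le_of_le' hexp tendsto_const_nhds
    · filter_upwards [eventually_gt_atTop (0:ℝ)] with s hs using hlow s hs
    · filter_upwards [eventually_gt_atTop (0:ℝ)] with s hs using hhigh s hs
  have := hmid.neg
  apply this.congr'
  filter_upwards [eventually_gt_atTop (0:ℝ)] with s hs using (key s hs).symm

lemma c4_sq {s : ℝ} (hs : 0 < s) : ((Real.pi * s^2) ^ (-(1/4:ℝ)))^2 = cc s := by
  rw [← Real.rpow_natCast _ 2, ← Real.rpow_mul (by positivity : (0:ℝ) ≤ Real.pi * s^2), cc]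
  norm_num

lemma G_sq {s : ℝ} (hs : 0 < s) (a x : ℝ) : (G s (x-a))^2 = gg s a x := by
  rw [G, gg, mul_pow, c4_sq hs]
  congr 1
  rw [sq, ← Real.exp_add]
  congr 1
  field_simp
  ring

lemma G_mul {s : ℝ} (hs : 0 < s) (x : ℝ) :
    G s (x-1) * G s x = Real.exp (-1/(4*s^2)) * gg s (1/2) x := by
  calc G s (x-1) * G s x
      = ((Real.pi * s^2) ^ (-(1/4:ℝ)))^2
          * (Real.exp (-(x-1)^2/(2*s^2)) * Real.exp (-x^2/(2*s^2))) := by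
        rw [G, G]; ring
    _ = cc s * Real.exp (-(x-1)^2/(2*s^2) + -x^2/(2*s^2)) := by
        rw [c4_sq hs, Real.exp_add]
    _ = Real.exp (-1/(4*s^2)) * gg s (1/2) x := by
        have hexp : -(x-1)^2/(2*s^2) + -x^2/(2*s^2) = -1/(4*s^2) + -(x-1/2)^2/s^2 := by
          field_simp
          ring
        rw [hexp, Real.exp_add, gg]
        ring

lemma exp_inv_tendsto : Tendsto (fun s : ℝ => Real.exp (-1/(4*s^2))) atTop (𝓝 1) := by
  have h0 : Tendsto (fun s : ℝ => -1/(4*s^2)) atTop (𝓝 0) := by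
    apply Tendsto.div_atTop tendsto_const_nhds
    exact (tendsto_pow_atTop two_ne_zero).const_mul_atTop (by norm_num)
  have := (Real.continuous_exp.tendsto 0).comp h0
  rwa [Real.exp_zero] at this

lemma spd_tendsto : Tendsto (fun s : ℝ => s * pd s) atTop (𝓝 0) := by
  have hup : Tendsto (fun s : ℝ => 1/(8*s)) atTop (𝓝 0) := by
    apply Tendsto.div_atTop tendsto_const_nhds
    exact tendsto_id.const_mul_atTop (by norm_num)
  apply tendsto_of_tendsto_of_tendsto_of_le_of_le' tendsto_const_nhds hup
  · filter_upwards [eventually_gt_atTop (0:ℝ)] with s hs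
    have h1 : Real.exp (-1/(4*s^2)) ≤ 1 := by
      rw [Real.exp_le_one_iff, neg_div]
      exact neg_nonpos.2 (by positivity)
    have h2 : 0 ≤ pd s := by rw [pd]; linarith
    exact mul_nonneg hs.le h2
  · filter_upwards [eventually_gt_atTop (0:ℝ)] with s hs
    have h1 := Real.add_one_le_exp (-1/(4*s^2))
    have h4 : -1/(4*s^2) = -(1/(4*s^2)) := neg_div _ _
    have h5 : 1/(4*s^2) = 2*(1/(8*s^2)) := by ring
    have h2 : s * pd s ≤ s * (1/(8*s^2)) := by
      apply mul_le_mul_of_nonneg_left _ hs.le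
      rw [pd]
      linarith
    calc s * pd s ≤ s * (1/(8*s^2)) := h2
      _ = 1/(8*s) := by field_simp

lemma trace_self_re {n : ℕ} (X : Matrix (Fin n) (Fin n) ℂ) :
    (Matrix.trace (Xᴴ * X)).re = ∑ j, ∑ i, Complex.normSq (X i j) := by
  have h : Matrix.trace (Xᴴ * X) = ∑ j, ∑ i, ((Complex.normSq (X i j) : ℂ)) := by
    simp [Matrix.trace, Matrix.diag, Matrix.mul_apply, Matrix.conjTranspose_apply,
      ← Complex.normSq_eq_conj_mul_self]
  rw [h]
  simp

lemma trace_self_re_nonneg {n : ℕ} (X : Matrix (Fin n) (Fin n) ℂ) :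
    0 ≤ (Matrix.trace (Xᴴ * X)).re := by
  rw [trace_self_re]
  exact Finset.sum_nonneg fun j _ => Finset.sum_nonneg fun i _ => Complex.normSq_nonneg _

lemma trace_self_re_eq_zero {n : ℕ} (X : Matrix (Fin n) (Fin n) ℂ)
    (h : (Matrix.trace (Xᴴ * X)).re = 0) : X = 0 := by
  rw [trace_self_re] at h
  ext i j
  have h1 : ∀ j ∈ Finset.univ, (0:ℝ) ≤ ∑ i, Complex.normSq (X i j) := by
    intro j _; exact Finset.sum_nonneg fun i _ => Complex.normSq_nonneg _
  have h2 := (Finset.sum_eq_zero_iff_of_nonneg h1).1 h j (Finset.mem_univ j)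
  have h3 : ∀ i ∈ Finset.univ, (0:ℝ) ≤ Complex.normSq (X i j) := by
    intro i _; exact Complex.normSq_nonneg _
  have h4 := (Finset.sum_eq_zero_iff_of_nonneg h3).1 h2 i (Finset.mem_univ i)
  simpa using Complex.normSq_eq_zero.1 h4

lemma Ns_herm {n : ℕ} (E : Matrix (Fin n) (Fin n) ℂ) (hE : E.IsHermitian) (s x : ℝ) :
    (Ns E s x)ᴴ = Ns E s x := by
  simp [Ns, conjTranspose_add, conjTranspose_smul, conjTranspose_sub, conjTranspose_one,
    hE.eq, Complex.star_def, Complex.conj_ofReal]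

lemma trace_Ns_expand {n : ℕ} (ρ E P : Matrix (Fin n) (Fin n) ℂ) (hE : E.IsHermitian)
    (s x : ℝ) :
    (Matrix.trace ((Ns E s x)ᴴ * P * Ns E s x * ρ)).re =
      (G s (x-1))^2 * (Matrix.trace (E*P*E*ρ)).re
      + (G s (x-1) * G s x) * ((Matrix.trace (E*P*(1-E)*ρ)).re
          + (Matrix.trace ((1-E)*P*E*ρ)).re)
      + (G s x)^2 * (Matrix.trace ((1-E)*P*(1-E)*ρ)).re := by
  rw [Ns_herm E hE]
  set F : Matrix (Fin n) (Fin n) ℂ := (1 : Matrix (Fin n) (Fin n) ℂ) - E with hF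
  set a : ℂ := (G s (x-1) : ℂ) with ha
  set b : ℂ := (G s x : ℂ) with hb
  have hNs : Ns E s x = a • E + b • F := rfl
  have hM : (a • E + b • F) * P * (a • E + b • F) * ρ
      = (a*a) • (E*P*E*ρ) + (a*b) • (F*P*E*ρ) + (b*a) • (E*P*F*ρ) + (b*b) • (F*P*F*ρ) := by
    simp only [add_mul, mul_add, smul_mul_assoc, mul_smul_comm, smul_smul, smul_add]
    abel
  rw [hNs, hM]
  simp only [trace_add, trace_smul, smul_eq_mul, Complex.add_re, ha, hb,
    ← Complex.ofReal_mul, Complex.re_ofReal_mul]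
  ring

lemma trace_P_decomp {n : ℕ} (ρ E P : Matrix (Fin n) (Fin n) ℂ) :
    (Matrix.trace (P * ρ)).re =
      (Matrix.trace (E*P*E*ρ)).re + ((Matrix.trace (E*P*(1-E)*ρ)).re
        + (Matrix.trace ((1-E)*P*E*ρ)).re) + (Matrix.trace ((1-E)*P*(1-E)*ρ)).re := by
  have hm : E*P*E*ρ + (E*P*(1-E)*ρ + (1-E)*P*E*ρ) + (1-E)*P*(1-E)*ρ = P * ρ := by
    noncomm_ring
  rw [← hm]
  simp [Matrix.trace_add]

lemma cross_re_eq {n : ℕ} (ρ E P : Matrix (Fin n) (Fin n) ℂ)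
    (hρ : ρ.IsHermitian) (hE : E.IsHermitian) (hP : P.IsHermitian) :
    (Matrix.trace ((1-E)*P*E*ρ)).re = (Matrix.trace (E*P*(1-E)*ρ)).re := by
  have hF : ((1:Matrix (Fin n) (Fin n) ℂ) - E).IsHermitian := by
    apply Matrix.IsHermitian.sub Matrix.isHermitian_one hE
  have h1 : (E*P*(1-E)*ρ)ᴴ = ρ * ((1-E) * (P * E)) := by
    simp only [Matrix.conjTranspose_mul, hρ.eq, hE.eq, hP.eq, hF.eq, Matrix.mul_assoc]
  have h2 : Matrix.trace ((E*P*(1-E)*ρ)ᴴ) = Matrix.trace ((1-E)*P*E*ρ) := by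
    rw [h1, Matrix.trace_mul_comm]
    simp [Matrix.mul_assoc]
  rw [← h2, Matrix.trace_conjTranspose]
  simp [Complex.star_def]

open scoped MatrixOrder in
lemma trace_P_rho_pos {n : ℕ} (ρ E P : Matrix (Fin n) (Fin n) ℂ)
    (hρ : ρ.PosSemidef) (hP : P.IsHermitian) (hP2 : P * P = P)
    (hneg : (Matrix.trace (ρ * E * P)).re < 0) :
    0 < (Matrix.trace (P * ρ)).re := by
  set M := CFC.sqrt ρ with hM
  have hMherm : M.IsHermitian := (CFC.sqrt_nonneg ρ).isSelfAdjoint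
  have hMM : M * M = ρ := CFC.sqrt_mul_sqrt_self ρ hρ.nonneg
  have key : Matrix.trace (P * ρ) = Matrix.trace ((P*M)ᴴ * (P*M)) := by
    have h1 : (P*M)ᴴ * (P*M) = M * (P * M) := by
      rw [Matrix.conjTranspose_mul, hP.eq, hMherm.eq, Matrix.mul_assoc, ← Matrix.mul_assoc P P,
        hP2]
    rw [h1, Matrix.trace_mul_comm M (P*M), Matrix.mul_assoc, hMM]
  have hnn : 0 ≤ (Matrix.trace (P * ρ)).re := key ▸ trace_self_re_nonneg (P*M)
  rcases hnn.lt_or_eq with h | h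
  · exact h
  · exfalso
    have hPM : P * M = 0 := trace_self_re_eq_zero _ (by rw [← key, ← h])
    have hPρ : P * ρ = 0 := by rw [← hMM, ← Matrix.mul_assoc, hPM, Matrix.zero_mul]
    have : Matrix.trace (ρ * E * P) = 0 := by
      rw [Matrix.mul_assoc, Matrix.trace_mul_comm ρ (E*P), Matrix.mul_assoc, hPρ,
        Matrix.mul_zero, Matrix.trace_zero]
    rw [this] at hneg
    simp at hneg

lemma integral_trace_Ns {n : ℕ} (ρ E P : Matrix (Fin n) (Fin n) ℂ) (hE : E.IsHermitian)
    {s : ℝ} (hs : 0 < s) :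
    (∫ x in Set.Iio (0:ℝ), (Matrix.trace ((Ns E s x)ᴴ * P * Ns E s x * ρ)).re)
      = (Matrix.trace (E*P*E*ρ)).re * KK s 1
        + ((Matrix.trace (E*P*(1-E)*ρ)).re + (Matrix.trace ((1-E)*P*E*ρ)).re)
            * (Real.exp (-1/(4*s^2)) * KK s (1/2))
        + (Matrix.trace ((1-E)*P*(1-E)*ρ)).re * KK s 0 := by
  set A := (Matrix.trace (E*P*E*ρ)).re with hA
  set B := (Matrix.trace (E*P*(1-E)*ρ)).re + (Matrix.trace ((1-E)*P*E*ρ)).re with hB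
  set C := (Matrix.trace ((1-E)*P*(1-E)*ρ)).re with hC
  have hpt : ∀ x : ℝ, (Matrix.trace ((Ns E s x)ᴴ * P * Ns E s x * ρ)).re
      = A * gg s 1 x + (B * Real.exp (-1/(4*s^2))) * gg s (1/2) x + C * gg s 0 x := by
    intro x
    have h0 : (G s x)^2 = gg s 0 x := by
      have := G_sq hs 0 x; rwa [sub_zero] at this
    rw [trace_Ns_expand ρ E P hE s x, G_sq hs 1 x, G_mul hs x, h0]
    ring
  rw [setIntegral_congr_fun measurableSet_Iio (fun x _ => hpt x)]
  have i1 : IntegrableOn (fun x => A * gg s 1 x) (Set.Iio (0:ℝ)) :=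
    (((gg_integrable hs 1).const_mul A)).integrableOn
  have i2 : IntegrableOn (fun x => (B * Real.exp (-1/(4*s^2))) * gg s (1/2) x)
      (Set.Iio (0:ℝ)) := (((gg_integrable hs (1/2)).const_mul _)).integrableOn
  have i3 : IntegrableOn (fun x => C * gg s 0 x) (Set.Iio (0:ℝ)) :=
    (((gg_integrable hs 0).const_mul C)).integrableOn
  have e1 : (∫ x in Set.Iio (0:ℝ), (A * gg s 1 x
        + (B * Real.exp (-1/(4*s^2))) * gg s (1/2) x + C * gg s 0 x))
      = (∫ x in Set.Iio (0:ℝ), (A * gg s 1 x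
          + (B * Real.exp (-1/(4*s^2))) * gg s (1/2) x))
        + ∫ x in Set.Iio (0:ℝ), C * gg s 0 x :=
    integral_add (i1.add i2) i3
  have e2 : (∫ x in Set.Iio (0:ℝ), (A * gg s 1 x
        + (B * Real.exp (-1/(4*s^2))) * gg s (1/2) x))
      = (∫ x in Set.Iio (0:ℝ), A * gg s 1 x)
        + ∫ x in Set.Iio (0:ℝ), (B * Real.exp (-1/(4*s^2))) * gg s (1/2) x :=
    integral_add i1 i2
  rw [e1, e2, integral_const_mul, integral_const_mul, integral_const_mul, KK, KK, KK]
  ring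


/-- condition 2c of the Lemma underlying Theorem 2. If `ρ` is a density
matrix and `E`, `P` orthogonal projections with anomalous negative weak value
`Re tr(ρ E P) < 0`, then there is `s₀ > 0` such that for all `s ≥ s₀` one has
`p^s_− > 1/2 + p^s_d / p_P`, where `p_P = tr(P ρ)`. -/
theorem anomalous_weak_value_violates_noncontextual_bound
    (n : ℕ) (ρ E P : Matrix (Fin n) (Fin n) ℂ)
    (hρ : ρ.PosSemidef) (hρtr : ρ.trace = 1)
    (hE : E.IsHermitian) (hE2 : E * E = E)
    (hP : P.IsHermitian) (hP2 : P * P = P)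
    (hneg : (Matrix.trace (ρ * E * P)).re < 0) :
    ∃ s₀ > (0 : ℝ), ∀ s ≥ s₀,
      pminus ρ E P s > 1 / 2 + pd s / (Matrix.trace (P * ρ)).re := by
  have hppos : 0 < (Matrix.trace (P * ρ)).re := trace_P_rho_pos ρ E P hρ hP hP2 hneg
  set A := (Matrix.trace (E*P*E*ρ)).re with hA
  set B := (Matrix.trace (E*P*(1-E)*ρ)).re + (Matrix.trace ((1-E)*P*E*ρ)).re with hB
  set C := (Matrix.trace ((1-E)*P*(1-E)*ρ)).re with hC
  set p := (Matrix.trace (P * ρ)).re with hp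
  have hpdec : p = A + B + C := trace_P_decomp ρ E P
  have hcross := cross_re_eq ρ E P hρ.1 hE hP
  have hAB : A + B/2 < 0 := by
    have hsplit : Matrix.trace (ρ*E*P)
        = Matrix.trace (E*P*E*ρ) + Matrix.trace (E*P*(1-E)*ρ) := by
      have hm : E*P*E*ρ + E*P*(1-E)*ρ = (E*P)*ρ := by noncomm_ring
      rw [Matrix.mul_assoc, Matrix.trace_mul_comm ρ (E*P), ← hm, Matrix.trace_add]
    have hng := hneg
    rw [hsplit, Complex.add_re] at hng
    rw [hB]
    linarith
  set L : ℝ := -((A + B/2) / Real.sqrt Real.pi) with hL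
  have hsqrtpi : (0:ℝ) < Real.sqrt Real.pi := Real.sqrt_pos.2 Real.pi_pos
  have hLpos : 0 < L := by
    rw [hL, neg_pos]
    exact div_neg_of_neg_of_pos hAB hsqrtpi
  have hlim : Tendsto (fun s => s * (A * (KK s 1 - 1/2)
      + B * (Real.exp (-1/(4*s^2)) * KK s (1/2) - 1/2) - pd s)) atTop (𝓝 L) := by
    have T1 := Tendsto.const_mul A (KK_tendsto (by norm_num : (0:ℝ) ≤ 1))
    have T2 := KK_tendsto (by norm_num : (0:ℝ) ≤ 1/2)
    have Te := exp_inv_tendsto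
    have Tpd := spd_tendsto
    have Tcomb := ((T1.add (Tendsto.const_mul B (Te.mul T2))).sub
      (Tendsto.const_mul B Tpd)).sub Tpd
    have hval : A * -(1 / Real.sqrt Real.pi)
        + B * (1 * -(1/2 / Real.sqrt Real.pi)) - B * 0 - 0 = L := by
      rw [hL]
      ring
    rw [hval] at Tcomb
    apply Tcomb.congr
    intro s
    simp only [pd]
    ring
  have hev : ∀ᶠ s in atTop, 0 < A * (KK s 1 - 1/2)
      + B * (Real.exp (-1/(4*s^2)) * KK s (1/2) - 1/2) - pd s := by
    have h1 : ∀ᶠ s in atTop, 0 < s * (A * (KK s 1 - 1/2)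
        + B * (Real.exp (-1/(4*s^2)) * KK s (1/2) - 1/2) - pd s) :=
      hlim.eventually (eventually_gt_nhds hLpos)
    filter_upwards [h1, eventually_gt_atTop (0:ℝ)] with s hsh hs
    by_contra hcon
    push_neg at hcon
    have := mul_nonpos_of_nonneg_of_nonpos hs.le hcon
    linarith
  obtain ⟨s₀', hs₀'⟩ := eventually_atTop.1 hev
  refine ⟨max s₀' 1, lt_of_lt_of_le one_pos (le_max_right _ _), fun s hss => ?_⟩
  have hs1 : (1:ℝ) ≤ s := le_trans (le_max_right _ _) hss
  have hs : 0 < s := lt_of_lt_of_le one_pos hs1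
  have hposexpr := hs₀' s (le_trans (le_max_left _ _) hss)
  have hint := integral_trace_Ns ρ E P hE hs
  rw [KK_zero hs] at hint
  have hnum : (∫ x in Set.Iio (0:ℝ), (Matrix.trace ((Ns E s x)ᴴ * P * Ns E s x * ρ)).re)
      > p/2 + pd s := by
    rw [hint]
    have hrw : A * KK s 1 + B * (Real.exp (-1/(4*s^2)) * KK s (1/2)) + C * (1/2)
        = (A * (KK s 1 - 1/2)
          + B * (Real.exp (-1/(4*s^2)) * KK s (1/2) - 1/2) - pd s)
          + ((A + B + C)/2 + pd s) := by
      ring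
    rw [hrw, ← hpdec]
    linarith
  have hp0 : p ≠ 0 := ne_of_gt hppos
  have hgoal : 1/2 + pd s / p = (1/p) * (p/2 + pd s) := by
    field_simp
  rw [pminus, ← hp, hgoal]
  exact mul_lt_mul_of_pos_left hnum (by positivity)

end Aux
end
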